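/- arXiv:1903.02368 — 3 statements merged into one kernel-verified Lean document; each statement's English description precedes it below -/
import Mathlib

section
/- If the group Γ of label-preserving automorphisms of a connected, locally finite, deterministically labelled graph X acts quasi-transitively (with finitely many vertex orbits) on X, then Γ is finitely generated. -/
/-- Adjacency of the labelled graph given by `lab : V → V → Option A`. -/
def LabAdj {V A : Type*} (lab : V → V → Option A) (x y : V) : Prop :=
  (lab x y).isSome ∨ (lab y x).isSome

/-- Deterministic labelling. -/
def Deterministic {V A : Type*} (lab : V → V → Option A) : Prop :=
  (∀ x y z : V, (lab x y).isSome → lab x y = lab x z → y = z) ∧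
  (∀ x y z : V, (lab y x).isSome → lab y x = lab z x → y = z)

/-- The group of label-preserving automorphisms, as a subgroup of `Equiv.Perm V`. -/
def labelAut {V A : Type*} (lab : V → V → Option A) : Subgroup (Equiv.Perm V) where
  carrier := {γ | ∀ x y : V, lab (γ x) (γ y) = lab x y}
  one_mem' := by intro x y; simp
  mul_mem' := by
    intro a b ha hb x y
    simpa [Equiv.Perm.mul_apply] using (ha (b x) (b y)).trans (hb x y)
  inv_mem' := by
    intro a ha x y
    simpa using (ha (a⁻¹ x) (a⁻¹ y)).symm

lemma labelAut_labAdj {V A : Type*} {lab : V → V → Option A} {γ : Equiv.Perm V}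
    (hγ : γ ∈ labelAut lab) {x y : V} (h : LabAdj lab x y) : LabAdj lab (γ x) (γ y) := by
  rcases h with h | h
  · exact Or.inl (by rw [hγ x y]; exact h)
  · exact Or.inr (by rw [hγ y x]; exact h)

lemma labelAut_fix {V A : Type*} {lab : V → V → Option A}
    (hdet : Deterministic lab) {γ : Equiv.Perm V} (hγ : γ ∈ labelAut lab)
    {x y : V} (hxy : Relation.ReflTransGen (LabAdj lab) x y) (hx : γ x = x) : γ y = y := by
  induction hxy with
  | refl => exact hx
  | @tail b c _ hbc ih =>
    rcases hbc with h | h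
    · have e := hγ b c
      rw [ih] at e
      exact (hdet.1 b c (γ c) h e.symm).symm
    · have e := hγ c b
      rw [ih] at e
      exact (hdet.2 b c (γ c) h e.symm).symm

/-- If the group of label-preserving automorphisms of a connected,
locally finite, deterministically labelled graph (with finite label alphabet)
acts quasi-transitively, then it is finitely generated. -/
theorem labelAut_fg_of_quasiTransitive
    {V A : Type*} [Fintype A] (lab : V → V → Option A)
    (hdet : Deterministic lab)
    (hconn : ∀ x y : V, Relation.ReflTransGen (LabAdj lab) x y)
    (hlf : ∀ x : V, {y : V | LabAdj lab x y}.Finite)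
    (hqt : ∃ R : Finset V, ∀ x : V, ∃ γ ∈ labelAut lab, γ x ∈ R) :
    Group.FG (labelAut lab) := by
  classical
  rcases isEmpty_or_nonempty V with hV | hV
  · have : Subsingleton (Equiv.Perm V) := inferInstance
    have : Finite (labelAut lab) := inferInstance
    exact Group.fg_of_finite
  · obtain ⟨R, hR⟩ := hqt
    obtain ⟨v₀⟩ := hV
    obtain ⟨γ₀, hγ₀, hγ₀R⟩ := hR v₀
    set d₀ := γ₀ v₀ with hd₀
    -- the free-action fact, at the subtype level
    have hfree : ∀ (g : labelAut lab) (x : V), (g : Equiv.Perm V) x = x → g = 1 := by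
      intro g x hx
      apply Subtype.ext
      apply Equiv.ext
      intro y
      simpa using labelAut_fix hdet g.2 (hconn x y) hx
    -- the generating set
    set S : Set (labelAut lab) :=
      {g | ∃ d' ∈ R, ∃ d ∈ R, d = (g : Equiv.Perm V) d' ∨ LabAdj lab d ((g : Equiv.Perm V) d')}
      with hS
    -- S is finite
    have hSfin : S.Finite := by
      have hN : (↑R ∪ ⋃ d ∈ R, {y | LabAdj lab d y} : Set V).Finite :=
        R.finite_toSet.union (Set.Finite.biUnion R.finite_toSet fun d _ => hlf d)
      have hsing : ∀ (d' y : V),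
          ({g : labelAut lab | (g : Equiv.Perm V) d' = y}).Subsingleton := by
        intro d' y g hg g' hg'
        simp only [Set.mem_setOf_eq] at hg hg'
        have hfix : (↑(g'⁻¹ * g) : Equiv.Perm V) d' = d' := by
          simp only [Subgroup.coe_mul, Subgroup.coe_inv, Equiv.Perm.mul_apply, hg, ← hg']
          exact Equiv.symm_apply_apply _ _
        have h1 : g'⁻¹ * g = 1 := hfree _ _ hfix
        exact (eq_of_inv_mul_eq_one h1).symm
      have hbig : (⋃ d' ∈ (R : Set V), ⋃ y ∈ (↑R ∪ ⋃ d ∈ R, {y | LabAdj lab d y} : Set V),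
          {g : labelAut lab | (g : Equiv.Perm V) d' = y}).Finite :=
        Set.Finite.biUnion R.finite_toSet fun d' _ =>
          Set.Finite.biUnion hN fun y _ => (hsing d' y).finite
      refine hbig.subset ?_
      intro g hg
      obtain ⟨d', hd', d, hd, hcase⟩ := hg
      have hy : ((g : Equiv.Perm V) d' : V) ∈ (↑R ∪ ⋃ d ∈ R, {y | LabAdj lab d y} : Set V) := by
        rcases hcase with h | h
        · exact Set.mem_union_left _ (h ▸ hd)
        · exact Set.mem_union_right _ (Set.mem_biUnion hd h)
      exact Set.mem_biUnion hd' (Set.mem_biUnion hy rfl)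
    -- S generates
    have key : ∀ y : V, Relation.ReflTransGen (LabAdj lab) d₀ y →
        ∀ h : labelAut lab, ((h : Equiv.Perm V))⁻¹ y ∈ R → h ∈ Subgroup.closure S := by
      intro y hy
      induction hy with
      | refl =>
        intro h hh
        apply Subgroup.subset_closure
        exact ⟨_, hh, d₀, hγ₀R, Or.inl (by simp)⟩
      | @tail b c _ hbc ih =>
        intro h hh
        obtain ⟨k, hk, hkR⟩ := hR b
        set K : labelAut lab := ⟨k, hk⟩ with hK
        have hKinv : K⁻¹ ∈ Subgroup.closure S := by
          apply ih
          simpa [K] using hkR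
        have hKh : K * h ∈ Subgroup.closure S := by
          apply Subgroup.subset_closure
          refine ⟨_, hh, k b, hkR, Or.inr ?_⟩
          have : (↑(K * h) : Equiv.Perm V) ((↑h : Equiv.Perm V)⁻¹ c) = k c := by
            simp [K, Equiv.Perm.mul_apply]
          rw [this]
          exact labelAut_labAdj hk hbc
        have : h = K⁻¹ * (K * h) := by group
        rw [this]
        exact mul_mem hKinv hKh
    have hclosure : Subgroup.closure S = ⊤ := by
      rw [eq_top_iff]
      intro g _
      exact key ((g : Equiv.Perm V) d₀) (hconn _ _) g (by simpa using hγ₀R)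
    rw [Group.fg_iff]
    exact ⟨S, hclosure, hSfin⟩
end

section
/- The language L = {a bᵏ c bˡ d bᵐ : k ≥ l > m ≥ 0} over the alphabet {a, b, c, d} is not context-free. -/
namespace CFPump

open ContextFreeGrammar

variable {T : Type} {g : ContextFreeGrammar.{0} T}

local notation "Sym" => Symbol T g.NT

/-- Derivation in exactly `n` steps. -/
inductive DerivesIn (g : ContextFreeGrammar.{0} T) :
    List (Symbol T g.NT) → List (Symbol T g.NT) → ℕ → Prop
  | refl (w : List (Symbol T g.NT)) : DerivesIn g w w 0
  | head {u v w : List (Symbol T g.NT)} {n : ℕ} :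
      g.Produces u v → DerivesIn g v w n → DerivesIn g u w (n + 1)

lemma DerivesIn.toDerives {u v : List Sym} {n : ℕ} (h : DerivesIn g u v n) :
    g.Derives u v := by
  induction h with
  | refl => rfl
  | head hp _ ih => exact hp.trans_derives ih

lemma DerivesIn.tail {u v w : List Sym} {n : ℕ} (h : DerivesIn g u v n)
    (hp : g.Produces v w) : DerivesIn g u w (n + 1) := by
  induction h with
  | refl => exact .head hp (.refl _)
  | head hp' _ ih => exact .head hp' (ih hp)

lemma derives_iff_derivesIn {u v : List Sym} :
    g.Derives u v ↔ ∃ n, DerivesIn g u v n := by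
  constructor
  · intro h
    induction h with
    | refl => exact ⟨0, .refl _⟩
    | tail _ hp ih =>
      obtain ⟨n, hn⟩ := ih
      exact ⟨n + 1, hn.tail hp⟩
  · rintro ⟨n, h⟩; exact h.toDerives

lemma DerivesIn.trans_add {u v w : List Sym} {a b : ℕ}
    (h1 : DerivesIn g u v a) (h2 : DerivesIn g v w b) : DerivesIn g u w (a + b) := by
  induction h1 with
  | refl => simpa using h2
  | head hp _ ih => have := (ih h2).head hp; simpa [Nat.add_right_comm] using this

lemma DerivesIn.append_left {u v : List Sym} {n : ℕ} (h : DerivesIn g u v n)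
    (p : List Sym) : DerivesIn g (p ++ u) (p ++ v) n := by
  induction h with
  | refl => exact .refl _
  | head hp _ ih => exact .head (hp.append_left p) ih

lemma DerivesIn.append_right {u v : List Sym} {n : ℕ} (h : DerivesIn g u v n)
    (p : List Sym) : DerivesIn g (u ++ p) (v ++ p) n := by
  induction h with
  | refl => exact .refl _
  | head hp _ ih => exact .head (hp.append_right p) ih

/-- A string of terminals only derives itself. -/
lemma DerivesIn.terminal_eq {z : List T} {v : List Sym} {n : ℕ}
    (h : DerivesIn g (List.map Symbol.terminal z) v n) :
    v = List.map Symbol.terminal z := by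
  cases h with
  | refl => rfl
  | head hp _ =>
    exfalso
    obtain ⟨r, _, hr⟩ := hp
    obtain ⟨p, q, hpq, -⟩ := hr.exists_parts
    have : Symbol.nonterminal r.input ∈ List.map (@Symbol.terminal T g.NT) z := by
      rw [hpq]; simp
    simp at this

/-- Splitting a derivation of a concatenation. -/
lemma DerivesIn.split {p q w : List Sym} {n : ℕ} (h : DerivesIn g (p ++ q) w n) :
    ∃ w1 w2 n1 n2, w = w1 ++ w2 ∧ n1 + n2 = n ∧
      DerivesIn g p w1 n1 ∧ DerivesIn g q w2 n2 := by
  induction n generalizing p q with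
  | zero =>
    cases h with
    | refl => exact ⟨p, q, 0, 0, rfl, rfl, .refl _, .refl _⟩
  | succ n ih =>
    cases h with
    | head hp hd =>
      obtain ⟨r, hrmem, hr⟩ := hp
      obtain ⟨pp, qq, hpq, hv⟩ := hr.exists_parts
      rw [List.append_assoc] at hpq  -- p ++ q = pp ++ ([nt] ++ qq)
      rcases List.append_eq_append_iff.mp hpq with ⟨a', ha1, ha2⟩ | ⟨c', hc1, hc2⟩
      · -- pp = p ++ a', q = a' ++ [nt] ++ qq : the nonterminal is inside q
        subst ha1
        rw [hv] at hd
        have hd' : DerivesIn g (p ++ (a' ++ r.output ++ qq)) w n := by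
          simpa [List.append_assoc] using hd
        obtain ⟨w1, w2, n1, n2, hw, hn, h1, h2⟩ := ih hd'
        refine ⟨w1, w2, n1, n2 + 1, hw, by omega, h1, .head ⟨r, hrmem, ?_⟩ h2⟩
        rw [ha2]
        exact ContextFreeRule.rewrites_iff.mpr ⟨a', qq, by simp, by simp⟩
      · -- p = pp ++ c', [nt] ++ qq = c' ++ q
        cases c' with
        | nil =>
          -- nonterminal at the start of q
          simp only [List.append_nil] at hc1
          simp only [List.nil_append] at hc2
          rw [hv] at hd
          rw [hc1]
          have hd' : DerivesIn g (pp ++ (r.output ++ qq)) w n := by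
            simpa [List.append_assoc] using hd
          obtain ⟨w1, w2, n1, n2, hw, hn, h1, h2⟩ := ih hd'
          refine ⟨w1, w2, n1, n2 + 1, hw, by omega, h1, .head ⟨r, hrmem, ?_⟩ h2⟩
          rw [← hc2]
          exact ContextFreeRule.rewrites_iff.mpr ⟨[], qq, by simp, by simp⟩
        | cons s c'' =>
          simp only [List.cons_append, List.cons.injEq] at hc2
          obtain ⟨rfl, hqq⟩ := hc2
          subst hc1 hqq
          rw [hv] at hd
          have hd' : DerivesIn g ((pp ++ r.output ++ c'') ++ q) w n := by
            simpa [List.append_assoc] using hd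
          obtain ⟨w1, w2, n1, n2, hw, hn, h1, h2⟩ := ih hd'
          refine ⟨w1, w2, n1 + 1, n2, hw, by omega, .head ⟨r, hrmem, ?_⟩ h1, h2⟩
          exact ContextFreeRule.rewrites_iff.mpr ⟨pp, c'', by simp, by simp⟩


/-- A rewrite of a single nonterminal. -/
lemma rewrite_singleton {A : g.NT} {r : ContextFreeRule T g.NT} {v : List Sym}
    (h : r.Rewrites [Symbol.nonterminal A] v) : r.input = A ∧ v = r.output := by
  obtain ⟨p, q, hpq, hv⟩ := h.exists_parts
  have hp : p = [] := by
    cases p with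
    | nil => rfl
    | cons a p' =>
      exfalso
      have := congrArg List.length hpq
      simp at this
  subst hp
  simp at hpq
  obtain ⟨h1, h2⟩ := hpq
  subst h2
  simp_all

open Classical in
/-- All nonterminals that can head a production. -/
noncomputable def allNT (g : ContextFreeGrammar.{0} T) : Finset g.NT :=
  have := Classical.decEq g.NT
  Finset.image (fun r : ContextFreeRule T g.NT => r.input) g.rules

/-- Bound on production lengths (and at least 2). -/
def mbound (g : ContextFreeGrammar.{0} T) : ℕ :=
  2 + g.rules.sup (fun r : ContextFreeRule T g.NT => r.output.length)

lemma two_le_mbound : 2 ≤ mbound g := by unfold mbound; omega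

lemma input_mem_allNT {r : ContextFreeRule T g.NT} (hr : r ∈ g.rules) :
    r.input ∈ allNT g := by
  classical
  unfold allNT
  convert Finset.mem_image_of_mem (fun r : ContextFreeRule T g.NT => r.input) hr

lemma output_le_mbound {r : ContextFreeRule T g.NT} (hr : r ∈ g.rules) :
    r.output.length ≤ mbound g := by
  have h := Finset.le_sup (f := fun r : ContextFreeRule T g.NT => r.output.length) hr
  unfold mbound
  omega

local notation "m" => mbound g

/-- Find a heavy nonterminal among a sentential form deriving a long terminal word. -/
lemma heavy {l : List Sym} {z : List T} {n d : ℕ} (hd : 1 ≤ d)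
    (h : DerivesIn g l (List.map Symbol.terminal z) n)
    (hlen : l.length * (m ^ d - 1) < z.length) :
    ∃ (B : g.NT) (u0 zi y0 : List T) (nctx ni : ℕ),
      z = u0 ++ zi ++ y0 ∧ nctx + ni = n ∧
      DerivesIn g l (List.map Symbol.terminal u0 ++ [Symbol.nonterminal B] ++
        List.map Symbol.terminal y0) nctx ∧
      DerivesIn g [Symbol.nonterminal B] (List.map Symbol.terminal zi) ni ∧
      m ^ d ≤ zi.length := by
  induction l generalizing z n with
  | nil =>
    exfalso
    have h0 : DerivesIn g (List.map Symbol.terminal ([] : List T)) (List.map Symbol.terminal z) n := by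
      simpa using h
    have := h0.terminal_eq
    simp at this
    subst this
    simp at hlen
  | cons s l' ih =>
    have hsplit : DerivesIn g ([s] ++ l') (List.map Symbol.terminal z) n := by simpa using h
    obtain ⟨w1, w2, n1, n2, hw, hn, h1, h2⟩ := hsplit.split
    obtain ⟨z1, z2, rfl, hw1, hw2⟩ := List.map_eq_append_iff.mp hw
    subst hw1 hw2
    by_cases hlong : m ^ d ≤ z1.length
    · -- this piece is heavy; its symbol must be a nonterminal
      cases s with
      | terminal t =>
        exfalso
        have : List.map Symbol.terminal z1 = List.map (@Symbol.terminal T g.NT) [t] := by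
          have := DerivesIn.terminal_eq (z := [t]) (by simpa using h1)
          simp only [List.map_cons, List.map_nil] at this ⊢
          exact this
        have hz1 : z1 = [t] := List.map_injective_iff.mpr (fun _ _ => Symbol.terminal.inj) this
        have hm : 2 ≤ m ^ d := le_trans two_le_mbound (Nat.le_self_pow (by omega) _)
        rw [hz1] at hlong
        simp at hlong
        omega
      | nonterminal B =>
        refine ⟨B, [], z1, z2, n2, n1, by simp, by omega, ?_, h1, hlong⟩
        simpa using h2.append_left [Symbol.nonterminal B]
    · -- recurse into the tail
      push_neg at hlong
      have hlen' : l'.length * (m ^ d - 1) < z2.length := by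
        have hz : (s :: l').length * (m ^ d - 1) = (m ^ d - 1) + l'.length * (m ^ d - 1) := by
          simp [Nat.succ_mul, Nat.add_comm]
        rw [hz] at hlen
        have : z1.length ≤ m ^ d - 1 := by omega
        have hlz : (List.map (@Symbol.terminal T g.NT) z1 ++ List.map Symbol.terminal z2).length
            = z1.length + z2.length := by simp
        simp only [List.length_append, List.length_map] at hlen ⊢
        omega
      obtain ⟨B, u0, zi, y0, nctx, ni, hz2, hnc, hctx, hin, hlen2⟩ := ih h2 hlen'
      refine ⟨B, z1 ++ u0, zi, y0, n1 + nctx, ni, by simp [hz2], by omega, ?_, hin, hlen2⟩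
      have step1 : DerivesIn g ([s] ++ l') (List.map Symbol.terminal z1 ++ l') n1 :=
        h1.append_right l'
      have step2 : DerivesIn g (List.map Symbol.terminal z1 ++ l')
          (List.map Symbol.terminal z1 ++ (List.map Symbol.terminal u0 ++
            [Symbol.nonterminal B] ++ List.map Symbol.terminal y0)) nctx :=
        hctx.append_left _
      have := step1.trans_add step2
      simpa [List.append_assoc] using this


/-- Core lemma: a long enough word forces a repeated nonterminal along a path
(case a), or hits a nonterminal from the forbidden set `F` (case b). -/
lemma core : ∀ (n : ℕ) (A : g.NT) (z : List T) (F : Finset g.NT),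
    DerivesIn g [Symbol.nonterminal A] (List.map Symbol.terminal z) n →
    F ⊆ allNT g →
    mbound g ^ ((allNT g).card + 1 - F.card) ≤ z.length →
    (∃ (B : g.NT) (u v w x y : List T) (n1 n2 n3 : ℕ),
        z = u ++ v ++ w ++ x ++ y ∧
        DerivesIn g [Symbol.nonterminal A]
          (List.map Symbol.terminal u ++ [Symbol.nonterminal B] ++
            List.map Symbol.terminal y) n1 ∧
        DerivesIn g [Symbol.nonterminal B]
          (List.map Symbol.terminal v ++ [Symbol.nonterminal B] ++
            List.map Symbol.terminal x) n2 ∧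
        DerivesIn g [Symbol.nonterminal B] (List.map Symbol.terminal w) n3 ∧
        1 ≤ n2 ∧ n1 + n2 + n3 ≤ n) ∨
    (∃ B ∈ F, ∃ (u w y : List T) (n1 n2 : ℕ),
        z = u ++ w ++ y ∧
        DerivesIn g [Symbol.nonterminal A]
          (List.map Symbol.terminal u ++ [Symbol.nonterminal B] ++
            List.map Symbol.terminal y) n1 ∧
        DerivesIn g [Symbol.nonterminal B] (List.map Symbol.terminal w) n2 ∧
        n1 + n2 ≤ n) := by
  classical
  intro n
  induction n using Nat.strong_induction_on with
  | _ n ih =>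
  intro A z F h hF hlen
  have hcardF : F.card ≤ (allNT g).card := Finset.card_le_card hF
  have hm2 : 2 ≤ mbound g := two_le_mbound
  by_cases hAF : A ∈ F
  · right
    exact ⟨A, hAF, [], z, [], 0, n, by simp,
      by simpa using DerivesIn.refl ([Symbol.nonterminal A] : List Sym), h, by omega⟩
  rw [show List.map (@Symbol.terminal T g.NT) z =
      id (List.map (@Symbol.terminal T g.NT) z) from rfl] at h
  generalize hgen : id (List.map (@Symbol.terminal T g.NT) z) = zz at h
  cases h with
  | refl =>
    exfalso
    simp only [id] at hgen
    cases z with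
    | nil => simp at hgen
    | cons a z' => simp at hgen
  | @head _ V _ n' hp hd =>
    simp only [id] at hgen
    subst hgen
    obtain ⟨r, hrmem, hr⟩ := hp
    obtain ⟨hinput, hV⟩ := rewrite_singleton hr
    subst hV
    have hA : A ∈ allNT g := hinput ▸ input_mem_allNT hrmem
    have hF' : insert A F ⊆ allNT g := Finset.insert_subset hA hF
    have hcard : (insert A F).card = F.card + 1 := Finset.card_insert_of_notMem hAF
    have hcard' : F.card + 1 ≤ (allNT g).card := hcard ▸ Finset.card_le_card hF'
    set d : ℕ := (allNT g).card - F.card with hddef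
    have hd1 : 1 ≤ d := by omega
    have hexp : (allNT g).card + 1 - F.card = d + 1 := by omega
    have hpowpos : 1 ≤ mbound g ^ d := Nat.one_le_pow _ _ (by omega)
    have hlen2 : r.output.length * (mbound g ^ d - 1) < z.length := by
      have h1 : r.output.length ≤ mbound g := output_le_mbound hrmem
      have h2 : r.output.length * (mbound g ^ d - 1) ≤ mbound g * (mbound g ^ d - 1) :=
        Nat.mul_le_mul_right _ h1
      have h3 : mbound g * (mbound g ^ d - 1) < mbound g * mbound g ^ d := by
        apply Nat.mul_lt_mul_of_le_of_lt (le_refl _) (by omega) (by omega)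
      have h4 : mbound g * mbound g ^ d = mbound g ^ (d + 1) := (pow_succ' _ _).symm
      rw [hexp] at hlen
      omega
    obtain ⟨B, u0, zi, y0, nctx, ni, hz, hnc, hctx, hinner, hlen3⟩ := heavy hd1 hd hlen2
    have hlen4 : mbound g ^ ((allNT g).card + 1 - (insert A F).card) ≤ zi.length := by
      rw [hcard]
      have : (allNT g).card + 1 - (F.card + 1) = d := by omega
      rw [this]
      exact hlen3
    -- outer context derivation [A] ⇒ u0* B y0* in nctx + 1 steps
    have hprodA : g.Produces [Symbol.nonterminal A] r.output :=
      ⟨r, hrmem, ContextFreeRule.rewrites_iff.mpr ⟨[], [], by simp [hinput], by simp⟩⟩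
    have d0 : DerivesIn g [Symbol.nonterminal A]
        (List.map Symbol.terminal u0 ++ [Symbol.nonterminal B] ++
          List.map Symbol.terminal y0) (nctx + 1) := .head hprodA hctx
    have embed : ∀ {Q : List Sym} {nq : ℕ}, DerivesIn g [Symbol.nonterminal B] Q nq →
        DerivesIn g (List.map Symbol.terminal u0 ++ [Symbol.nonterminal B] ++
            List.map Symbol.terminal y0)
          (List.map Symbol.terminal u0 ++ Q ++ List.map Symbol.terminal y0) nq := by
      intro Q nq hq
      simpa [List.append_assoc] using
        ((hq.append_left (List.map Symbol.terminal u0)).append_right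
          (List.map Symbol.terminal y0))
    have hni : ni < n' + 1 := by omega
    rcases ih ni hni B zi (insert A F) hinner hF' hlen4 with
      ⟨B', u, v, w, x, y, n1, n2, n3, hzi, h1, h2, h3, hn2, hsum⟩ |
      ⟨C, hC, u, w, y, p1, p2, hzi, h1, h2, hsum⟩
    · left
      refine ⟨B', u0 ++ u, v, w, x, y ++ y0, nctx + 1 + n1, n2, n3, ?_, ?_, h2, h3, hn2, by omega⟩
      · rw [hz, hzi]; simp [List.append_assoc]
      · have := d0.trans_add (embed h1)
        simpa [List.map_append, List.append_assoc] using this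
    · rcases Finset.mem_insert.mp hC with rfl | hCF
      · left
        refine ⟨C, [], u0 ++ u, w, y ++ y0, [], 0, nctx + 1 + p1, p2, ?_, ?_, ?_, h2, by omega,
          by omega⟩
        · rw [hz, hzi]; simp [List.append_assoc]
        · simpa using DerivesIn.refl ([Symbol.nonterminal C] : List Sym)
        · have := d0.trans_add (embed h1)
          simpa [List.map_append, List.append_assoc] using this
      · right
        refine ⟨C, hCF, u0 ++ u, w, y ++ y0, nctx + 1 + p1, p2, ?_, ?_, h2, by omega⟩
        · rw [hz, hzi]; simp [List.append_assoc]
        · have := d0.trans_add (embed h1)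
          simpa [List.map_append, List.append_assoc] using this


/-- `i`-fold repetition of a list. -/
def powL {α : Type} : ℕ → List α → List α
  | 0, _ => []
  | i + 1, l => l ++ powL i l

lemma powL_comm {α : Type} (i : ℕ) (l : List α) : powL i l ++ l = l ++ powL i l := by
  induction i with
  | zero => simp [powL]
  | succ i ih => simp only [powL, List.append_assoc, ih]

lemma powL_replicate {α : Type} (i p : ℕ) (c : α) :
    powL i (List.replicate p c) = List.replicate (i * p) c := by
  induction i with
  | zero => simp [powL]
  | succ i ih => rw [powL, ih, Nat.succ_mul, Nat.add_comm, List.replicate_add]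

/-- Weak pumping lemma for context-free languages. -/
theorem weak_pumping {L : Language T} (hL : L.IsContextFree) :
    ∃ n0 : ℕ, ∀ z ∈ L, n0 ≤ z.length → ∃ u v w x y : List T,
      z = u ++ v ++ w ++ x ++ y ∧ v ++ x ≠ [] ∧
      ∀ i : ℕ, u ++ powL i v ++ w ++ powL i x ++ y ∈ L := by
  classical
  obtain ⟨g, rfl⟩ := hL
  refine ⟨mbound g ^ ((allNT g).card + 1), fun z hz hlen => ?_⟩
  have hex : ∃ n, DerivesIn g [Symbol.nonterminal g.initial]
      (List.map Symbol.terminal z) n :=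
    derives_iff_derivesIn.mp hz
  have hmin := Nat.find_spec hex
  have hlen' : mbound g ^ ((allNT g).card + 1 - (∅ : Finset g.NT).card) ≤ z.length := by
    simpa using hlen
  rcases core (Nat.find hex) g.initial z ∅ hmin (Finset.empty_subset _) hlen' with
    ⟨B, u, v, w, x, y, n1, n2, n3, hzeq, h1, h2, h3, hn2, hsum⟩ |
    ⟨C, hC, _, _, _, _, _, _, _, _⟩
  swap
  · exact absurd hC (Finset.notMem_empty C)
  by_cases hvx : v ++ x = ([] : List T)
  · exfalso
    obtain ⟨rfl, rfl⟩ := List.append_eq_nil_iff.mp hvx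
    have h2' : DerivesIn g [Symbol.nonterminal B] [Symbol.nonterminal B] n2 := by
      simpa using h2
    have hcomb : DerivesIn g [Symbol.nonterminal g.initial]
        (List.map Symbol.terminal z) (n1 + n3) := by
      have e1 : DerivesIn g (List.map Symbol.terminal u ++ [Symbol.nonterminal B] ++
          List.map Symbol.terminal y)
          (List.map Symbol.terminal u ++ List.map Symbol.terminal w ++
            List.map Symbol.terminal y) n3 := by
        simpa [List.append_assoc] using
          ((h3.append_left (List.map Symbol.terminal u)).append_right
            (List.map Symbol.terminal y))
      have := h1.trans_add e1
      have hzz : z = u ++ w ++ y := by simpa using hzeq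
      simpa [hzz, List.map_append, List.append_assoc] using this
    have hlt : n1 + n3 < Nat.find hex := by omega
    exact Nat.find_min hex hlt hcomb
  · refine ⟨u, v, w, x, y, hzeq, hvx, fun i => ?_⟩
    rw [ContextFreeGrammar.mem_language_iff]
    have D1 := h1.toDerives
    have D2 := h2.toDerives
    have D3 := h3.toDerives
    have claim : ∀ i : ℕ, g.Derives [Symbol.nonterminal B]
        (List.map Symbol.terminal (powL i v) ++ [Symbol.nonterminal B] ++
          List.map Symbol.terminal (powL i x)) := by
      intro i
      induction i with
      | zero => simpa [powL] using ContextFreeGrammar.Derives.refl _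
      | succ i ih =>
        have emb : g.Derives (List.map Symbol.terminal v ++ [Symbol.nonterminal B] ++
            List.map Symbol.terminal x)
            (List.map Symbol.terminal v ++
              (List.map Symbol.terminal (powL i v) ++ [Symbol.nonterminal B] ++
                List.map Symbol.terminal (powL i x)) ++ List.map Symbol.terminal x) := by
          simpa [List.append_assoc] using
            ((ih.append_left (List.map Symbol.terminal v)).append_right
              (List.map Symbol.terminal x))
        have := D2.trans emb
        have hx' : powL i x ++ x = x ++ powL i x := powL_comm i x
        have hshape : List.map (@Symbol.terminal T g.NT) v ++
              (List.map Symbol.terminal (powL i v) ++ [Symbol.nonterminal B] ++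
                List.map Symbol.terminal (powL i x)) ++ List.map Symbol.terminal x =
            List.map Symbol.terminal (powL (i+1) v) ++ [Symbol.nonterminal B] ++
              List.map Symbol.terminal (powL (i+1) x) := by
          show _ = List.map Symbol.terminal (v ++ powL i v) ++ _ ++
            List.map Symbol.terminal (x ++ powL i x)
          rw [← hx']
          simp [List.map_append, List.append_assoc]
        rwa [hshape] at this
    have step2 : g.Derives (List.map Symbol.terminal u ++ [Symbol.nonterminal B] ++
        List.map Symbol.terminal y)
        (List.map Symbol.terminal u ++
          (List.map Symbol.terminal (powL i v) ++ [Symbol.nonterminal B] ++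
            List.map Symbol.terminal (powL i x)) ++ List.map Symbol.terminal y) := by
      simpa [List.append_assoc] using
        (((claim i).append_left (List.map Symbol.terminal u)).append_right
          (List.map Symbol.terminal y))
    have step3 : g.Derives
        (List.map Symbol.terminal u ++
          (List.map Symbol.terminal (powL i v) ++ [Symbol.nonterminal B] ++
            List.map Symbol.terminal (powL i x)) ++ List.map Symbol.terminal y)
        (List.map Symbol.terminal u ++
          (List.map Symbol.terminal (powL i v) ++ List.map Symbol.terminal w ++
            List.map Symbol.terminal (powL i x)) ++ List.map Symbol.terminal y) := by
      have := ((D3.append_left (List.map Symbol.terminal u ++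
        List.map Symbol.terminal (powL i v))).append_right
        (List.map Symbol.terminal (powL i x) ++ List.map Symbol.terminal y))
      simpa [List.append_assoc] using this
    have := (D1.trans step2).trans step3
    simpa [List.map_append, List.append_assoc] using this


/- ## List helpers for the final combinatorial argument -/

lemma takeWhile_append_all {α : Type} {p : α → Bool} {A B : List α}
    (h : ∀ a ∈ A, p a = true) : (A ++ B).takeWhile p = A ++ B.takeWhile p := by
  induction A with
  | nil => simp
  | cons a A ih =>
    have hpa : p a = true := h a (by simp)
    simp only [List.cons_append, List.takeWhile_cons, hpa]
    rw [ih (fun b hb => h b (by simp [hb]))]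
    simp

lemma takeWhile_append_stop {α : Type} {p : α → Bool} {A B : List α} {a : α}
    (ha : a ∈ A) (hpa : p a = false) : (A ++ B).takeWhile p = A.takeWhile p := by
  induction A with
  | nil => simp at ha
  | cons b A ih =>
    rcases List.mem_cons.mp ha with rfl | ha'
    · simp [List.takeWhile_cons, hpa]
    · cases hb : p b with
      | true => simp only [List.cons_append, List.takeWhile_cons, hb, ih ha']
      | false => simp [List.takeWhile_cons, hb]

lemma count_powL {α : Type} [DecidableEq α] (c : α) (i : ℕ) (l : List α) :
    List.count c (powL i l) = i * List.count c l := by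
  induction i with
  | zero => simp [powL]
  | succ i ih => rw [powL, List.count_append, ih, Nat.succ_mul, Nat.add_comm]


/- ## The canonical words of the language -/

/-- `canon k l mm = a b^k c b^l d b^m`. -/
def canon (k l mm : ℕ) : List (Fin 4) :=
  [0] ++ List.replicate k 1 ++ [2] ++ List.replicate l 1 ++ [3] ++ List.replicate mm 1

/-- `P2 c` holds iff `c` is not the marker `c = 2`. -/
def P2 : Fin 4 → Bool := fun c => c != 2
/-- `P3 c` holds iff `c` is not the marker `d = 3`. -/
def P3 : Fin 4 → Bool := fun c => c != 3

/-- number of `b`s before the `c` marker -/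
def F1 (W : List (Fin 4)) : ℕ := List.count 1 (W.takeWhile P2)
/-- number of `b`s after the `d` marker -/
def F3 (W : List (Fin 4)) : ℕ := List.count 1 (W.reverse.takeWhile P3)

lemma F1_canon (k l mm : ℕ) : F1 (canon k l mm) = k := by
  unfold F1 canon
  simp only [List.append_assoc]
  rw [takeWhile_append_all (A := ([0] : List (Fin 4))) (by decide)]
  rw [takeWhile_append_all (A := List.replicate k (1 : Fin 4))
    (fun a ha => by rw [List.eq_of_mem_replicate ha]; decide)]
  simp only [List.singleton_append, List.takeWhile_cons]
  norm_num [P2, List.count_append, List.count_replicate]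

lemma F3_canon (k l mm : ℕ) : F3 (canon k l mm) = mm := by
  unfold F3 canon
  simp only [List.reverse_append, List.reverse_replicate, List.reverse_cons,
    List.reverse_nil, List.nil_append, List.append_assoc]
  rw [takeWhile_append_all (A := List.replicate mm (1 : Fin 4))
    (fun a ha => by rw [List.eq_of_mem_replicate ha]; decide)]
  simp only [List.singleton_append, List.takeWhile_cons]
  norm_num [P3, List.count_append, List.count_replicate]

lemma count1_canon (k l mm : ℕ) : List.count 1 (canon k l mm) = k + l + mm := by
  unfold canon
  simp [List.count_append, List.count_replicate]
  omega

lemma count_canon_ne1 (c : Fin 4) (hc : c ≠ 1) (k l mm : ℕ) :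
    List.count c (canon k l mm) = 1 := by
  fin_cases c
  · simp [canon, List.count_append, List.count_replicate]
  · exact absurd rfl hc
  · simp [canon, List.count_append, List.count_replicate]
  · simp [canon, List.count_append, List.count_replicate]


lemma F1_stop {u R : List (Fin 4)} (hu : (2 : Fin 4) ∈ u) : F1 (u ++ R) = F1 u := by
  unfold F1
  rw [takeWhile_append_stop hu (by decide)]

lemma F1_pass {u R : List (Fin 4)} (hu : (2 : Fin 4) ∉ u) :
    F1 (u ++ R) = List.count 1 u + F1 R := by
  unfold F1
  rw [takeWhile_append_all (fun a ha => by
    have : a ≠ 2 := fun h => hu (h ▸ ha)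
    simpa [P2] using this)]
  rw [List.count_append]

lemma F1_replicate_pass (n : ℕ) (R : List (Fin 4)) :
    F1 (List.replicate n 1 ++ R) = n + F1 R := by
  rw [F1_pass (fun h => by
    have := List.eq_of_mem_replicate h
    simp at this)]
  simp [List.count_replicate]

lemma F3_stop {B A : List (Fin 4)} (hb : (3 : Fin 4) ∈ B) : F3 (A ++ B) = F3 B := by
  unfold F3
  rw [List.reverse_append, takeWhile_append_stop (List.mem_reverse.mpr hb) (by decide)]

lemma F3_pass {B A : List (Fin 4)} (hb : (3 : Fin 4) ∉ B) :
    F3 (A ++ B) = List.count 1 B + F3 A := by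
  unfold F3
  rw [List.reverse_append, takeWhile_append_all (fun a ha => by
    have : a ≠ 3 := fun h => hb (h ▸ (List.mem_reverse.mp ha))
    simpa [P3] using this)]
  rw [List.count_append, List.count_reverse]

lemma F3_replicate_pass (n : ℕ) (A : List (Fin 4)) :
    F3 (A ++ List.replicate n 1) = n + F3 A := by
  rw [F3_pass (fun h => by
    have := List.eq_of_mem_replicate h
    simp at this)]
  simp [List.count_replicate]

lemma fin4_eq_one {b : Fin 4} (h0 : b ≠ 0) (h2 : b ≠ 2) (h3 : b ≠ 3) : b = 1 := by
  fin_cases b <;> simp_all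

end CFPump

open CFPump

/-- the language `{a bᵏ c bˡ d bᵐ : k ≥ l > m ≥ 0}` over a four letter
alphabet (`0 = a`, `1 = b`, `2 = c`, `3 = d`) is not context-free. -/
theorem abcd_language_not_context_free :
    ¬ Language.IsContextFree
      {z : List (Fin 4) | ∃ k l m : ℕ, l ≤ k ∧ m < l ∧
        z = [0] ++ List.replicate k 1 ++ [2] ++ List.replicate l 1 ++ [3] ++
          List.replicate m 1} := by
  intro hcf
  obtain ⟨n0, hpl⟩ := weak_pumping hcf
  set N : ℕ := n0 + 1 with hNdef
  have hN1 : 1 ≤ N := by omega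
  have hsmem : canon N N (N - 1) ∈
      {z : List (Fin 4) | ∃ k l m : ℕ, l ≤ k ∧ m < l ∧
        z = [0] ++ List.replicate k 1 ++ [2] ++ List.replicate l 1 ++ [3] ++
          List.replicate m 1} :=
    ⟨N, N, N - 1, le_refl _, by omega, rfl⟩
  have hslen : n0 ≤ (canon N N (N - 1)).length := by
    simp [canon]
    omega
  obtain ⟨u, v, w, x, y, hdec, hvx, hpump⟩ := hpl _ hsmem hslen
  -- rephrase pumped membership in terms of `canon`
  have hpump' : ∀ i, ∃ k l mm, l ≤ k ∧ mm < l ∧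
      u ++ powL i v ++ w ++ powL i x ++ y = canon k l mm := fun i => hpump i
  -- letters `0`, `2`, `3` do not occur in `v` or `x`
  have hcv : ∀ c : Fin 4, c ≠ 1 → List.count c v = 0 ∧ List.count c x = 0 := by
    intro c hc
    obtain ⟨k1, l1, m1, -, -, h1⟩ := hpump' 1
    obtain ⟨k2, l2, m2, -, -, h2⟩ := hpump' 2
    have e1 := congrArg (List.count c) h1
    have e2 := congrArg (List.count c) h2
    rw [count_canon_ne1 c hc] at e1 e2
    simp only [List.count_append, count_powL] at e1 e2
    omega
  have hv1 : v = List.replicate v.length 1 :=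
    List.eq_replicate_of_mem (fun b hb => fin4_eq_one
      (fun h => (List.count_eq_zero.mp (hcv 0 (by decide)).1) (h ▸ hb))
      (fun h => (List.count_eq_zero.mp (hcv 2 (by decide)).1) (h ▸ hb))
      (fun h => (List.count_eq_zero.mp (hcv 3 (by decide)).1) (h ▸ hb)))
  have hx1 : x = List.replicate x.length 1 :=
    List.eq_replicate_of_mem (fun b hb => fin4_eq_one
      (fun h => (List.count_eq_zero.mp (hcv 0 (by decide)).2) (h ▸ hb))
      (fun h => (List.count_eq_zero.mp (hcv 2 (by decide)).2) (h ▸ hb))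
      (fun h => (List.count_eq_zero.mp (hcv 3 (by decide)).2) (h ▸ hb)))
  set p : ℕ := v.length with hp
  set q : ℕ := x.length with hq
  have hδ : 1 ≤ p + q := by
    rcases Nat.lt_or_ge 0 (p + q) with h | h
    · omega
    · exfalso
      apply hvx
      have hp0 : p = 0 := by omega
      have hq0 : q = 0 := by omega
      rw [List.eq_nil_of_length_eq_zero hp0, List.eq_nil_of_length_eq_zero hq0]
      rfl
  -- the pumped words, with the replicate blocks made explicit
  set W : ℕ → List (Fin 4) := fun i =>
    u ++ List.replicate (i * p) 1 ++ w ++ List.replicate (i * q) 1 ++ y with hW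
  have hWeq : ∀ i, W i = u ++ powL i v ++ w ++ powL i x ++ y := by
    intro i
    rw [hW]
    simp only
    rw [← powL_replicate i p 1, ← powL_replicate i q 1, ← hv1, ← hx1]
  have hWpump : ∀ i, ∃ k l mm, l ≤ k ∧ mm < l ∧ W i = canon k l mm := by
    intro i
    obtain ⟨k, l, mm, h1, h2, h3⟩ := hpump' i
    exact ⟨k, l, mm, h1, h2, by rw [hWeq i]; exact h3⟩
  have hW1 : W 1 = canon N N (N - 1) := by
    rw [hWeq 1]
    simp only [powL, List.append_nil]
    exact hdec.symm
  -- locate the markers 2 and 3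
  have h2s : (2 : Fin 4) ∈ canon N N (N - 1) := by simp [canon]
  have h3s : (3 : Fin 4) ∈ canon N N (N - 1) := by simp [canon]
  have h2mem : (2 : Fin 4) ∈ u ∨ (2 : Fin 4) ∈ w ∨ (2 : Fin 4) ∈ y := by
    rw [hdec] at h2s
    simp only [List.mem_append] at h2s
    have hnv : (2 : Fin 4) ∉ v := List.count_eq_zero.mp (hcv 2 (by decide)).1
    have hnx : (2 : Fin 4) ∉ x := List.count_eq_zero.mp (hcv 2 (by decide)).2
    tauto
  have h3mem : (3 : Fin 4) ∈ u ∨ (3 : Fin 4) ∈ w ∨ (3 : Fin 4) ∈ y := by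
    rw [hdec] at h3s
    simp only [List.mem_append] at h3s
    have hnv : (3 : Fin 4) ∉ v := List.count_eq_zero.mp (hcv 3 (by decide)).1
    have hnx : (3 : Fin 4) ∉ x := List.count_eq_zero.mp (hcv 3 (by decide)).2
    tauto
  -- linearity of the three coordinates
  have hF1lin : ∃ K0 α, (α = 0 ∨ α = p ∨ α = p + q) ∧ ∀ i, F1 (W i) = K0 + i * α := by
    have hWassoc : ∀ i, W i = u ++ (List.replicate (i * p) 1 ++ (w ++
        (List.replicate (i * q) 1 ++ y))) := by
      intro i; rw [hW]; simp [List.append_assoc]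
    rcases h2mem with h2u | h2w | h2y
    · refine ⟨F1 u, 0, Or.inl rfl, fun i => ?_⟩
      rw [hWassoc i, F1_stop h2u]
      omega
    · by_cases h2u : (2 : Fin 4) ∈ u
      · refine ⟨F1 u, 0, Or.inl rfl, fun i => ?_⟩
        rw [hWassoc i, F1_stop h2u]; omega
      · refine ⟨List.count 1 u + F1 w, p, Or.inr (Or.inl rfl), fun i => ?_⟩
        rw [hWassoc i, F1_pass h2u, F1_replicate_pass, F1_stop h2w]
        ring
    · by_cases h2u : (2 : Fin 4) ∈ u
      · refine ⟨F1 u, 0, Or.inl rfl, fun i => ?_⟩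
        rw [hWassoc i, F1_stop h2u]; omega
      · by_cases h2w : (2 : Fin 4) ∈ w
        · refine ⟨List.count 1 u + F1 w, p, Or.inr (Or.inl rfl), fun i => ?_⟩
          rw [hWassoc i, F1_pass h2u, F1_replicate_pass, F1_stop h2w]
          ring
        · refine ⟨List.count 1 u + List.count 1 w + F1 y, p + q,
            Or.inr (Or.inr rfl), fun i => ?_⟩
          rw [hWassoc i, F1_pass h2u, F1_replicate_pass, F1_pass h2w,
            F1_replicate_pass]
          ring
  have hF3lin : ∃ M0 γ, (γ = 0 ∨ γ = q ∨ γ = p + q) ∧ ∀ i, F3 (W i) = M0 + i * γ := by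
    have hWassoc : ∀ i, W i = (((u ++ List.replicate (i * p) 1) ++ w) ++
        List.replicate (i * q) 1) ++ y := fun i => rfl
    rcases h3mem with h3u | h3w | h3y
    · by_cases h3y : (3 : Fin 4) ∈ y
      · refine ⟨F3 y, 0, Or.inl rfl, fun i => ?_⟩
        rw [hWassoc i, F3_stop h3y]; omega
      · by_cases h3w : (3 : Fin 4) ∈ w
        · refine ⟨List.count 1 y + F3 w, q, Or.inr (Or.inl rfl), fun i => ?_⟩
          rw [hWassoc i, F3_pass h3y, F3_replicate_pass, F3_stop h3w]
          ring
        · refine ⟨List.count 1 y + List.count 1 w + F3 u, p + q,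
            Or.inr (Or.inr rfl), fun i => ?_⟩
          rw [hWassoc i, F3_pass h3y, F3_replicate_pass, F3_pass h3w,
            F3_replicate_pass]
          ring
    · by_cases h3y : (3 : Fin 4) ∈ y
      · refine ⟨F3 y, 0, Or.inl rfl, fun i => ?_⟩
        rw [hWassoc i, F3_stop h3y]; omega
      · refine ⟨List.count 1 y + F3 w, q, Or.inr (Or.inl rfl), fun i => ?_⟩
        rw [hWassoc i, F3_pass h3y, F3_replicate_pass, F3_stop h3w]
        ring
    · refine ⟨F3 y, 0, Or.inl rfl, fun i => ?_⟩
      rw [hWassoc i, F3_stop h3y]; omega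
  have hC1lin : ∀ i, List.count 1 (W i) =
      (List.count 1 u + List.count 1 w + List.count 1 y) + i * (p + q) := by
    intro i
    rw [hW]
    simp only [List.count_append, List.count_replicate]
    ring_nf
    simp [List.count_replicate]
    ring
  obtain ⟨K0, α, hαcase, hF1⟩ := hF1lin
  obtain ⟨M0, γ, hγcase, hF3⟩ := hF3lin
  set T0 : ℕ := List.count 1 u + List.count 1 w + List.count 1 y with hT0
  -- the three coordinates of the three pumped words
  obtain ⟨k0, l0, m0, hlk0, hml0, hWc0⟩ := hWpump 0
  obtain ⟨k2, l2, m2, hlk2, hml2, hWc2⟩ := hWpump 2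
  -- i = 0
  have ek0 : k0 = K0 := by
    have := hF1 0; rw [hWc0, F1_canon] at this; omega
  have em0 : m0 = M0 := by
    have := hF3 0; rw [hWc0, F3_canon] at this; omega
  have et0 : k0 + l0 + m0 = T0 := by
    have := hC1lin 0; rw [hWc0, count1_canon] at this; omega
  -- i = 1
  have ek1 : N = K0 + α := by
    have := hF1 1; rw [hW1, F1_canon] at this; omega
  have em1 : N - 1 = M0 + γ := by
    have := hF3 1; rw [hW1, F3_canon] at this; omega
  have et1 : N + N + (N - 1) = T0 + (p + q) := by
    have := hC1lin 1; rw [hW1, count1_canon] at this; omega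
  -- i = 2
  have ek2 : k2 = K0 + 2 * α := by
    have := hF1 2; rw [hWc2, F1_canon] at this; omega
  have em2 : m2 = M0 + 2 * γ := by
    have := hF3 2; rw [hWc2, F3_canon] at this; omega
  have et2 : k2 + l2 + m2 = T0 + 2 * (p + q) := by
    have := hC1lin 2; rw [hWc2, count1_canon] at this; omega
  rcases hαcase with rfl | rfl | rfl <;> rcases hγcase with rfl | rfl | rfl <;> omega
end

section
/- Let X be a connected, locally finite graph and Γ ≤ AUT(X) act quasi-transitively on X. Then for any block B of X, the setwise stabilizer Γ_B = {γ ∈ Γ : γB = B} acts quasi-transitively on B (with finitely many edge orbits, hence finitely many vertex orbits). -/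
/-- The induced subgraph on `B` has no cutvertex. -/
def NoCutVertex {V : Type*} (G : SimpleGraph V) (B : Set V) : Prop :=
  ∀ v ∈ B, (G.induce (B \ {v})).Preconnected

/-- `B` is a block of `G`: a maximal connected induced subgraph without a cutvertex. -/
def IsBlock {V : Type*} (G : SimpleGraph V) (B : Set V) : Prop :=
  (G.induce B).Connected ∧ NoCutVertex G B ∧
    ∀ B' : Set V, B ⊆ B' → (G.induce B').Connected → NoCutVertex G B' → B' = B

open SimpleGraph

section Aux

variable {V : Type*} {G : SimpleGraph V}

/-- Inclusion homomorphism between induced subgraphs. -/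
private def inclHom {s t : Set V} (h : s ⊆ t) : G.induce s →g G.induce t where
  toFun v := ⟨v.1, h v.2⟩
  map_rel' := fun ha => ha

private lemma reach_mono {s t : Set V} (h : s ⊆ t) {a b : s}
    (hr : (G.induce s).Reachable a b) :
    (G.induce t).Reachable ⟨a.1, h a.2⟩ ⟨b.1, h b.2⟩ :=
  hr.map (inclHom h)

private lemma preconn_union {s t : Set V} {p : V} (hps : p ∈ s) (hpt : p ∈ t)
    (hs : (G.induce s).Preconnected) (ht : (G.induce t).Preconnected) :
    (G.induce (s ∪ t)).Preconnected := by
  have key : ∀ c : ↥(s ∪ t), (G.induce (s ∪ t)).Reachable c ⟨p, Or.inl hps⟩ := by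
    rintro ⟨c, hc | hc⟩
    · exact reach_mono Set.subset_union_left (hs ⟨c, hc⟩ ⟨p, hps⟩)
    · exact reach_mono Set.subset_union_right (ht ⟨c, hc⟩ ⟨p, hpt⟩)
  intro a b
  exact (key a).trans (key b).symm

/-- The isomorphism of induced subgraphs coming from an adjacency-preserving
permutation. -/
private def imgIso (γ : Equiv.Perm V) (hγ : ∀ x y, G.Adj (γ x) (γ y) ↔ G.Adj x y)
    (s : Set V) : G.induce s ≃g G.induce (γ '' s) where
  toEquiv := γ.image s
  map_rel_iff' := by intro a b; exact hγ a b

private lemma preconn_image {γ : Equiv.Perm V}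
    (hγ : ∀ x y, G.Adj (γ x) (γ y) ↔ G.Adj x y) {s : Set V}
    (hs : (G.induce s).Preconnected) : (G.induce (γ '' s)).Preconnected := by
  rintro ⟨a, x, hx, rfl⟩ ⟨b, y, hy, rfl⟩
  exact (hs ⟨x, hx⟩ ⟨y, hy⟩).map (imgIso γ hγ s).toHom

private lemma conn_image {γ : Equiv.Perm V}
    (hγ : ∀ x y, G.Adj (γ x) (γ y) ↔ G.Adj x y) {s : Set V}
    (hs : (G.induce s).Connected) : (G.induce (γ '' s)).Connected := by
  have hpre := hs.preconnected
  have hne : Nonempty ↥s := hs.nonempty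
  obtain ⟨⟨x, hx⟩⟩ := hne
  rw [SimpleGraph.connected_iff]
  exact ⟨preconn_image hγ hpre, ⟨⟨γ x, x, hx, rfl⟩⟩⟩

private lemma noCut_image {γ : Equiv.Perm V}
    (hγ : ∀ x y, G.Adj (γ x) (γ y) ↔ G.Adj x y) {s : Set V}
    (hs : NoCutVertex G s) : NoCutVertex G (γ '' s) := by
  rintro w ⟨v, hv, rfl⟩
  have h : γ '' (s \ {v}) = (γ '' s) \ {γ v} := by
    rw [Set.image_diff γ.injective, Set.image_singleton]
  rw [← h]
  exact preconn_image hγ (hs v hv)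

private lemma adj_symm' {γ : Equiv.Perm V}
    (hγ : ∀ x y, G.Adj (γ x) (γ y) ↔ G.Adj x y) (x y : V) :
    G.Adj (γ.symm x) (γ.symm y) ↔ G.Adj x y := by
  conv_rhs => rw [← γ.apply_symm_apply x, ← γ.apply_symm_apply y]
  exact (hγ _ _).symm

/-- Images of blocks under adjacency-preserving permutations are blocks. -/
private lemma isBlock_image {γ : Equiv.Perm V}
    (hγ : ∀ x y, G.Adj (γ x) (γ y) ↔ G.Adj x y) {s : Set V}
    (hs : IsBlock G s) : IsBlock G (γ '' s) := by
  obtain ⟨h1, h2, h3⟩ := hs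
  refine ⟨conn_image hγ h1, noCut_image hγ h2, ?_⟩
  intro B' hsub hconn hnc
  have h4 : s ⊆ ⇑γ.symm '' B' := by
    intro x hx
    exact ⟨γ x, hsub ⟨x, hx, rfl⟩, γ.symm_apply_apply x⟩
  have h5 := h3 (⇑γ.symm '' B') h4 (conn_image (adj_symm' hγ) hconn)
      (noCut_image (adj_symm' hγ) hnc)
  have h6 : γ '' (⇑γ.symm '' B') = B' := by
    rw [Set.image_image]; simp
  rw [← h6, h5]

/-- Two blocks sharing an edge coincide. -/
private lemma block_unique {s t : Set V} (hs : IsBlock G s) (ht : IsBlock G t)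
    {x y : V} (hxs : x ∈ s) (hys : y ∈ s) (hxt : x ∈ t) (hyt : y ∈ t)
    (hadj : G.Adj x y) : s = t := by
  obtain ⟨hs1, hs2, hs3⟩ := hs
  obtain ⟨ht1, ht2, ht3⟩ := ht
  have hne : x ≠ y := hadj.ne
  have hnc : NoCutVertex G (s ∪ t) := by
    intro v _
    obtain ⟨z, hzs, hzt, hzv⟩ : ∃ z, z ∈ s ∧ z ∈ t ∧ z ≠ v := by
      by_cases hxv : x = v
      · exact ⟨y, hys, hyt, fun h => hne (hxv.trans h.symm) |>.elim⟩
      · exact ⟨x, hxs, hxt, hxv⟩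
    have hus : (G.induce (s \ {v})).Preconnected := by
      by_cases hvs : v ∈ s
      · exact hs2 v hvs
      · rw [Set.diff_singleton_eq_self hvs]; exact hs1.preconnected
    have hut : (G.induce (t \ {v})).Preconnected := by
      by_cases hvt : v ∈ t
      · exact ht2 v hvt
      · rw [Set.diff_singleton_eq_self hvt]; exact ht1.preconnected
    rw [Set.union_diff_distrib]
    exact preconn_union ⟨hzs, hzv⟩ ⟨hzt, hzv⟩ hus hut
  have hc : (G.induce (s ∪ t)).Connected := by
    rw [SimpleGraph.connected_iff]
    exact ⟨preconn_union hxs hxt hs1.preconnected ht1.preconnected, ⟨⟨x, Or.inl hxs⟩⟩⟩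
  have e1 : s ∪ t = s := hs3 (s ∪ t) Set.subset_union_left hc hnc
  have e2 : s ∪ t = t := ht3 (s ∪ t) Set.subset_union_right hc hnc
  rw [← e1, e2]

/-- A vertex of a connected induced subgraph with no neighbour inside
determines a singleton. -/
private lemma eq_singleton_of_no_adj {s : Set V} (hs : (G.induce s).Connected)
    {x : V} (hx : x ∈ s) (h : ∀ y ∈ s, ¬ G.Adj x y) : s = {x} := by
  apply Set.eq_singleton_iff_unique_mem.2 ⟨hx, ?_⟩
  intro z hz
  by_contra hzx
  obtain ⟨w⟩ := hs.preconnected ⟨x, hx⟩ ⟨z, hz⟩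
  have hnil : ¬ w.Nil := by
    apply SimpleGraph.Walk.not_nil_of_ne
    intro hcon
    exact hzx (congrArg Subtype.val hcon).symm
  have hadj := SimpleGraph.Walk.adj_snd hnil
  exact h _ (w.getVert 1).2 hadj

end Aux

/-- if `Γ` acts quasi-transitively on a connected, locally finite graph
`G`, then for any block `B` the setwise stabilizer of `B` in `Γ` acts with finitely
many orbits on the edges of `B`, and with finitely many orbits on the vertices of
`B`. -/
theorem block_stabilizer_quasiTransitive
    {V : Type*} (G : SimpleGraph V) [G.LocallyFinite] (hconn : G.Connected)
    (Γ : Subgroup (Equiv.Perm V))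
    (hΓ : ∀ γ ∈ Γ, ∀ x y : V, G.Adj (γ x) (γ y) ↔ G.Adj x y)
    (hqt : ∃ R : Finset V, ∀ x : V, ∃ γ ∈ Γ, γ x ∈ R)
    (B : Set V) (hB : IsBlock G B) :
    (∃ E₀ : Finset (V × V), ∀ x y : V, x ∈ B → y ∈ B → G.Adj x y →
        ∃ γ ∈ Γ, γ '' B = B ∧ (γ x, γ y) ∈ E₀) ∧
    (∃ R₀ : Finset V, ∀ x ∈ B, ∃ γ ∈ Γ, γ '' B = B ∧ γ x ∈ R₀) := by
  classical
  obtain ⟨R, hR⟩ := hqt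
  set E₁ : Finset (V × V) :=
    R.biUnion (fun r => (G.neighborFinset r).image (fun s => (r, s))) with hE₁
  set P : V × V → Prop := fun p =>
    ∃ γ ∈ Γ, ∃ x y, x ∈ B ∧ y ∈ B ∧ G.Adj x y ∧ γ x = p.1 ∧ γ y = p.2 with hP
  set f : V × V → V × V := fun p =>
    if h : P p then (h.choose_spec.2.choose, h.choose_spec.2.choose_spec.choose)
    else p with hf
  have hfspec : ∀ p, P p →
      ∃ γ ∈ Γ, (f p).1 ∈ B ∧ (f p).2 ∈ B ∧ G.Adj (f p).1 (f p).2 ∧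
        γ (f p).1 = p.1 ∧ γ (f p).2 = p.2 := by
    intro p hp
    have hfp : f p = (hp.choose_spec.2.choose, hp.choose_spec.2.choose_spec.choose) :=
      dif_pos hp
    rw [hfp]
    exact ⟨hp.choose, hp.choose_spec.1, hp.choose_spec.2.choose_spec.choose_spec⟩
  set E₀ : Finset (V × V) := E₁.image f with hE₀
  have main : ∀ x y : V, x ∈ B → y ∈ B → G.Adj x y →
      ∃ γ ∈ Γ, γ '' B = B ∧ (γ x, γ y) ∈ E₀ := by
    intro x y hx hy hadj
    obtain ⟨γ, hγΓ, hγR⟩ := hR x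
    have hadjγ : G.Adj (γ x) (γ y) := (hΓ γ hγΓ x y).2 hadj
    have hpE₁ : (γ x, γ y) ∈ E₁ := by
      apply Finset.mem_biUnion.2 ⟨γ x, hγR, ?_⟩
      exact Finset.mem_image.2 ⟨γ y, (G.mem_neighborFinset _ _).2 hadjγ, rfl⟩
    have hPp : P (γ x, γ y) := ⟨γ, hγΓ, x, y, hx, hy, hadj, rfl, rfl⟩
    obtain ⟨δ₀, hδ₀Γ, hx₀B, hy₀B, hadj₀, he1, he2⟩ := hfspec (γ x, γ y) hPp
    set δ : Equiv.Perm V := δ₀⁻¹ * γ with hδ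
    have hδΓ : δ ∈ Γ := mul_mem (inv_mem hδ₀Γ) hγΓ
    have he1' : δ₀ (f (γ x, γ y)).1 = γ x := he1
    have he2' : δ₀ (f (γ x, γ y)).2 = γ y := he2
    have hδx : δ x = (f (γ x, γ y)).1 := by
      apply δ₀.injective
      rw [he1', hδ, Equiv.Perm.mul_apply, ← Equiv.Perm.mul_apply, mul_inv_cancel,
        Equiv.Perm.one_apply]
    have hδy : δ y = (f (γ x, γ y)).2 := by
      apply δ₀.injective
      rw [he2', hδ, Equiv.Perm.mul_apply, ← Equiv.Perm.mul_apply, mul_inv_cancel,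
        Equiv.Perm.one_apply]
    have hBδ : ⇑δ '' B = B := by
      apply block_unique (isBlock_image (hΓ δ hδΓ) hB) hB
        (x := (f (γ x, γ y)).1) (y := (f (γ x, γ y)).2) ?_ ?_ hx₀B hy₀B hadj₀
      · exact ⟨x, hx, hδx⟩
      · exact ⟨y, hy, hδy⟩
    refine ⟨δ, hδΓ, hBδ, ?_⟩
    rw [hδx, hδy]
    have : ((f (γ x, γ y)).1, (f (γ x, γ y)).2) = f (γ x, γ y) := rfl
    rw [this]
    exact Finset.mem_image_of_mem f hpE₁
  refine ⟨⟨E₀, main⟩, ?_⟩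
  set R₀ : Finset V := E₀.image Prod.fst ∪
    (if h : ∃ v, B = {v} then {h.choose} else ∅) with hR₀
  refine ⟨R₀, ?_⟩
  intro x hx
  by_cases hnb : ∃ y ∈ B, G.Adj x y
  · obtain ⟨y, hy, hadj⟩ := hnb
    obtain ⟨γ, hγΓ, hγB, hγE⟩ := main x y hx hy hadj
    refine ⟨γ, hγΓ, hγB, ?_⟩
    apply Finset.mem_union_left
    exact Finset.mem_image.2 ⟨(γ x, γ y), hγE, rfl⟩
  · push_neg at hnb
    have hsing : B = {x} := eq_singleton_of_no_adj hB.1 hx hnb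
    have hex : ∃ v, B = {v} := ⟨x, hsing⟩
    refine ⟨1, one_mem Γ, by simp, ?_⟩
    apply Finset.mem_union_right
    rw [dif_pos hex]
    have hx' : x ∈ ({hex.choose} : Set V) := hex.choose_spec ▸ hx
    have : x = hex.choose := Set.mem_singleton_iff.1 hx'
    simp [this]
end
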